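/- Let M ≥ 4 and N ≥ 2 be integers, ε = 1/(N²·M²) and δ = ε². Consider the instance over colors {white, red, blue} consisting of N phases, where each phase is M white items (the first of size δ and the remaining M−1 of size ε) followed by 2M items of size δ with alternating colors red, blue, red, blue, … (M red and M blue per phase). Then OPT = M for this instance, while Worst Fit uses NM − N + 1 bins. Consequently, Worst Fit has unbounded asymptotic competitive ratio for colorful bin packing with three colors. -/

import Mathlib

/-- The three colors used in the construction. -/
inductive Color3 : Type
  | white
  | red
  | blue
deriving DecidableEq

/-- The size of the `t`-th item (1-based) of the sequence `σ` of (size, color) pairs. -/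
def itemSize (σ : List (ℝ × Color3)) (t : ℕ) : ℝ := (σ.getD (t - 1) (0, Color3.white)).1

/-- The color of the `t`-th item (1-based) of the sequence `σ`. -/
def itemColor (σ : List (ℝ × Color3)) (t : ℕ) : Color3 := (σ.getD (t - 1) (0, Color3.white)).2

/-- `f` (mapping item indices `1,…,σ.length` to bin indices) is a valid packing of `σ`:
each bin's total size is at most `1` and two items packed consecutively into the same bin
have different colors. -/
def ValidAssign (σ : List (ℝ × Color3)) (f : ℕ → ℕ) : Prop :=
  (∀ b, (∑ t ∈ (Finset.Icc 1 σ.length).filter fun t => f t = b, itemSize σ t) ≤ 1) ∧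
  (∀ i j, 1 ≤ i → i < j → j ≤ σ.length → f i = f j →
    (∀ l, i < l → l < j → f l ≠ f i) → itemColor σ i ≠ itemColor σ j)

/-- `OPTlist σ` is the minimum number of bins over all packings of `σ`. -/
noncomputable def OPTlist (σ : List (ℝ × Color3)) : ℕ :=
  sInf {L | ∃ f : ℕ → ℕ, (∀ t, 1 ≤ t → t ≤ σ.length → 1 ≤ f t ∧ f t ≤ L) ∧ ValidAssign σ f}

/-- One step of Worst Fit: the current bins are listed as (load, color-of-last-item) pairs;
among the bins where the item fits and whose last item has a different color, the new item
goes into one with the largest remaining empty space (i.e. smallest load), and a new bin is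
opened if there is no feasible bin. -/
noncomputable def wfStep (bins : List (ℝ × Color3)) (item : ℝ × Color3) :
    List (ℝ × Color3) :=
  match ((List.range bins.length).filter fun i =>
      decide ((bins.getD i (2, item.2)).1 + item.1 ≤ 1 ∧
        (bins.getD i (2, item.2)).2 ≠ item.2)).argmin
      (fun i => (bins.getD i (2, item.2)).1) with
  | some i => bins.set i ((bins.getD i (2, item.2)).1 + item.1, item.2)
  | none => bins ++ [item]

/-- The bins produced by Worst Fit on the input sequence `σ`. -/
noncomputable def wfRun (σ : List (ℝ × Color3)) : List (ℝ × Color3) :=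
  σ.foldl wfStep []

/-- The instance of Proposition 1 for Worst Fit: `N` phases, each consisting of one white item
of size `δ`, then `M − 1` white items of size `ε`, then `2M` items of size `δ` of alternating
colors red, blue, red, blue, … -/
def wfInstance (N M : ℕ) (ε δ : ℝ) : List (ℝ × Color3) :=
  (List.replicate N
    ((δ, Color3.white) :: List.replicate (M - 1) (ε, Color3.white) ++
      (List.range (2 * M)).map fun j =>
        (δ, if j % 2 = 0 then Color3.red else Color3.blue))).flatten

/- ==================== auxiliary lemmas ==================== -/

lemma wfStep_append (bins : List (ℝ × Color3)) (item : ℝ × Color3)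
    (h : ∀ i < bins.length, ¬((bins.getD i (2, item.2)).1 + item.1 ≤ 1 ∧
      (bins.getD i (2, item.2)).2 ≠ item.2)) :
    wfStep bins item = bins ++ [item] := by
  unfold wfStep
  have hnil : ((List.range bins.length).filter fun i =>
      decide ((bins.getD i (2, item.2)).1 + item.1 ≤ 1 ∧
        (bins.getD i (2, item.2)).2 ≠ item.2)) = [] := by
    rw [List.filter_eq_nil_iff]
    intro a ha
    simp only [List.mem_range] at ha
    simpa using h a ha
  rw [hnil, List.argmin_nil]

lemma wfStep_head (L : ℝ) (c : Color3) (R : List (ℝ × Color3)) (s : ℝ) (c' : Color3)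
    (h0 : L + s ≤ 1) (hc : c ≠ c')
    (hR : ∀ i : ℕ, i < R.length → (R.getD i (2, c')).2 = c' ∨ L < (R.getD i (2, c')).1) :
    wfStep ((L, c) :: R) (s, c') = (L + s, c') :: R := by
  unfold wfStep
  set bins := (L, c) :: R with hbins
  set lst := ((List.range bins.length).filter fun i =>
      decide ((bins.getD i (2, c')).1 + s ≤ 1 ∧ (bins.getD i (2, c')).2 ≠ c')) with hlst
  have h0mem : 0 ∈ lst := by
    rw [hlst, List.mem_filter]
    constructor
    · simp [hbins]
    · simp only [decide_eq_true_eq]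
      exact ⟨h0, hc⟩
  obtain ⟨m, hm⟩ : ∃ m, lst.argmin (fun i => (bins.getD i (2, c')).1) = some m := by
    rcases h : lst.argmin (fun i => (bins.getD i (2, c')).1) with _ | m
    · exfalso
      have := List.argmin_eq_none.mp h
      rw [this] at h0mem
      exact List.not_mem_nil h0mem
    · exact ⟨m, rfl⟩
  have hmmem : m ∈ lst := List.argmin_mem hm
  have hle : (bins.getD m (2, c')).1 ≤ (bins.getD 0 (2, c')).1 :=
    List.le_of_mem_argmin (f := fun i => (bins.getD i (2, c')).1) h0mem
      (Option.mem_def.mpr hm)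
  have hm0 : m = 0 := by
    rcases m with _ | i
    · rfl
    · exfalso
      rw [hlst, List.mem_filter] at hmmem
      obtain ⟨hmr, hmp⟩ := hmmem
      simp only [List.mem_range] at hmr
      simp only [decide_eq_true_eq] at hmp
      have hiR : i < R.length := by simpa [hbins] using hmr
      have hget : bins.getD (i+1) (2, c') = R.getD i (2, c') := rfl
      rw [hget] at hmp hle
      rcases hR i hiR with h1 | h1
      · exact hmp.2 h1
      · have : (bins.getD 0 (2, c')).1 = L := rfl
        rw [this] at hle
        linarith
  rw [hm0] at hm
  rw [hm]
  rfl

def wcol (j : ℕ) : Color3 := if j % 2 = 0 then Color3.red else Color3.blue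

lemma wcol_ne_white (j : ℕ) : wcol j ≠ Color3.white := by
  unfold wcol; split <;> simp

lemma wcol_eq_iff (a b : ℕ) : wcol a = wcol b ↔ a % 2 = b % 2 := by
  unfold wcol
  constructor
  · intro h
    by_contra hne
    rcases Nat.lt_or_ge (a % 2) 1 with h1 | h1 <;> rcases Nat.lt_or_ge (b % 2) 1 with h2 | h2
    · omega
    · rw [if_pos (by omega), if_neg (by omega)] at h; exact Color3.noConfusion h
    · rw [if_neg (by omega), if_pos (by omega)] at h; exact Color3.noConfusion h
    · omega
  · intro h; rw [h]

lemma wcol_succ_ne (j : ℕ) : wcol j ≠ wcol (j + 1) := by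
  intro h
  have := (wcol_eq_iff j (j+1)).mp h
  omega

lemma getD_white (L : ℝ) (c : Color3) (k : ℕ) (ε : ℝ) (i : ℕ) (hc : c = Color3.white) :
    (((L, c) :: List.replicate k (ε, Color3.white)).getD i (2, Color3.white)).2
      = Color3.white := by
  rcases i with _ | i
  · simpa using hc
  · simp only [List.getD_cons_succ]
    rcases Nat.lt_or_ge i k with h | h
    · rw [List.getD_eq_getElem _ _ (by simpa using h)]
      simp
    · rw [List.getD_eq_default _ _ (by simpa using h)]

lemma fold_whites (ε L : ℝ) (k m : ℕ) :
    List.foldl wfStep ((L, Color3.white) :: List.replicate k (ε, Color3.white))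
      (List.replicate m ((ε : ℝ), Color3.white)) =
    (L, Color3.white) :: List.replicate (k + m) (ε, Color3.white) := by
  induction m generalizing k with
  | zero => simp
  | succ m ih =>
    rw [List.replicate_succ, List.foldl_cons, wfStep_append]
    · have : ((L, Color3.white) :: List.replicate k (ε, Color3.white)) ++ [(ε, Color3.white)]
        = (L, Color3.white) :: List.replicate (k + 1) (ε, Color3.white) := by
        rw [List.replicate_succ']
        rfl
      rw [this, ih, show k + 1 + m = k + (m + 1) by omega]
    · intro i _ hcon
      exact hcon.2 (getD_white L Color3.white k ε i rfl)

lemma fold_colored (ε δ : ℝ) (hδ : 0 < δ) (hε1 : ε ≤ 1) :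
    ∀ (n j : ℕ) (L : ℝ) (c : Color3) (k : ℕ), c ≠ wcol j → 0 ≤ L → L + n * δ ≤ ε →
    ∃ c', List.foldl wfStep ((L, c) :: List.replicate k (ε, Color3.white))
        ((List.range' j n).map (fun j => ((δ : ℝ), wcol j))) =
        (L + n * δ, c') :: List.replicate k (ε, Color3.white) ∧
      c' ≠ wcol (j + n) ∧ (n = 0 → c' = c) ∧ (0 < n → c' ≠ Color3.white) := by
  intro n
  induction n with
  | zero =>
    intro j L c k hc hL hb
    exact ⟨c, by simp, by simpa using hc, fun _ => rfl, fun h => absurd h (by omega)⟩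
  | succ n ih =>
    intro j L c k hc hL hb
    have hcast : ((n : ℝ) + 1) * δ = δ + n * δ := by ring
    have hbn : L + (n+1 : ℕ) * δ ≤ ε := hb
    have hb' : L + δ + n * δ ≤ ε := by push_cast at hbn; linarith
    have hLε : L < ε := by nlinarith [Nat.cast_nonneg (α := ℝ) n]
    rw [List.range'_succ, List.map_cons, List.foldl_cons]
    rw [wfStep_head L c _ δ (wcol j) (by push_cast at hbn; nlinarith [Nat.cast_nonneg (α := ℝ) n]) hc ?side]
    case side =>
      intro i hi
      right
      rw [List.getD_eq_getElem _ _ (by simpa using hi)]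
      simp only [List.getElem_replicate]
      exact hLε
    obtain ⟨c', h1, h2, h3, h4⟩ := ih (j+1) (L + δ) (wcol j) k (wcol_succ_ne j) (by linarith) hb'
    refine ⟨c', ?_, ?_, ?_, ?_⟩
    · rw [h1]
      congr 2
      push_cast
      ring
    · rw [show j + (n+1) = (j+1) + n by omega] at *
      exact h2
    · omega
    · intro _
      rcases Nat.eq_zero_or_pos n with h | h
      · rw [h3 h]; exact wcol_ne_white j
      · exact h4 h

def phaseL (M : ℕ) (ε δ : ℝ) : List (ℝ × Color3) :=
  (δ, Color3.white) :: List.replicate (M - 1) (ε, Color3.white) ++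
    (List.range (2 * M)).map fun j => (δ, wcol j)

lemma wfInstance_eq (N M : ℕ) (ε δ : ℝ) :
    wfInstance N M ε δ = (List.replicate N (phaseL M ε δ)).flatten := rfl

lemma fold_phase (M : ℕ) (ε δ : ℝ) (hδ : 0 < δ) (hε1 : ε ≤ 1) (hM : 1 ≤ M)
    (L : ℝ) (c : Color3) (k : ℕ) (hc : c ≠ Color3.white) (hL : 0 ≤ L)
    (hb : L + (2 * M + 1 : ℕ) * δ ≤ ε) :
    ∃ c', List.foldl wfStep ((L, c) :: List.replicate k (ε, Color3.white)) (phaseL M ε δ) =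
      (L + (2 * M + 1 : ℕ) * δ, c') :: List.replicate (k + (M - 1)) (ε, Color3.white) ∧
      c' ≠ Color3.white := by
  have hbe : L + ((2 * M : ℕ) : ℝ) * δ + δ ≤ ε := by push_cast at hb ⊢; linarith
  unfold phaseL
  rw [List.cons_append, List.foldl_cons]
  rw [wfStep_head L c _ δ Color3.white (by nlinarith [Nat.cast_nonneg (α := ℝ) (2*M)]) hc
    (fun i hi => Or.inl (by
      rw [List.getD_eq_getElem _ _ (by simpa using hi)]
      simp))]
  rw [List.foldl_append, fold_whites]
  rw [List.range_eq_range']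
  obtain ⟨c', h1, _, _, h4⟩ := fold_colored ε δ hδ hε1 (2 * M) 0 (L + δ) Color3.white
    (k + (M - 1)) (Ne.symm (wcol_ne_white 0)) (by linarith) (by push_cast at hbe ⊢; linarith)
  refine ⟨c', ?_, h4 (by omega)⟩
  rw [h1, show L + δ + ((2*M : ℕ) : ℝ) * δ = L + ((2 * M + 1 : ℕ) : ℝ) * δ by push_cast; ring]

lemma fold_phase1 (M : ℕ) (ε δ : ℝ) (hδ : 0 < δ) (hε1 : ε ≤ 1) (hM : 1 ≤ M)
    (hb : ((2 * M + 1 : ℕ) : ℝ) * δ ≤ ε) :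
    ∃ c', List.foldl wfStep [] (phaseL M ε δ) =
      (((2 * M + 1 : ℕ) : ℝ) * δ, c') :: List.replicate (M - 1) (ε, Color3.white) ∧
      c' ≠ Color3.white := by
  unfold phaseL
  rw [List.cons_append, List.foldl_cons]
  rw [wfStep_append [] _ (by intro i hi; simp at hi)]
  have : ([] : List (ℝ × Color3)) ++ [(δ, Color3.white)]
      = (δ, Color3.white) :: List.replicate 0 (ε, Color3.white) := rfl
  rw [this, List.foldl_append, fold_whites, List.range_eq_range', Nat.zero_add]
  obtain ⟨c', h1, _, _, h4⟩ := fold_colored ε δ hδ hε1 (2 * M) 0 δ Color3.white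
    (0 + (M - 1)) (Ne.symm (wcol_ne_white 0)) (by linarith) (by push_cast at hb ⊢; linarith)
  refine ⟨c', ?_, h4 (by omega)⟩
  rw [Nat.zero_add] at h1
  rw [h1, show δ + ((2*M : ℕ) : ℝ) * δ = ((2 * M + 1 : ℕ) : ℝ) * δ by push_cast; ring]

lemma fold_run (N M : ℕ) (ε δ : ℝ) (hδ : 0 < δ) (hε1 : ε ≤ 1) (hM : 1 ≤ M) (hN : 1 ≤ N)
    (hb : ((N * (2 * M + 1) : ℕ) : ℝ) * δ ≤ ε) :
    ∃ c', wfRun (wfInstance N M ε δ) =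
      (((N * (2 * M + 1) : ℕ) : ℝ) * δ, c') :: List.replicate (N * (M - 1)) (ε, Color3.white) ∧
      c' ≠ Color3.white := by
  rw [wfInstance_eq, wfRun]
  have key : ∀ p, 1 ≤ p → p ≤ N →
      ∃ c', List.foldl wfStep [] (List.replicate p (phaseL M ε δ)).flatten =
        (((p * (2 * M + 1) : ℕ) : ℝ) * δ, c') ::
          List.replicate (p * (M - 1)) (ε, Color3.white) ∧ c' ≠ Color3.white := by
    intro p
    induction p with
    | zero => omega
    | succ p ih =>
      intro _ hpN
      rcases Nat.eq_zero_or_pos p with h0 | h0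
      · subst h0
        simpa using fold_phase1 M ε δ hδ hε1 hM (by
          refine le_trans ?_ hb
          have : ((2*M+1 : ℕ) : ℝ) ≤ ((N * (2*M+1) : ℕ) : ℝ) := by
            exact_mod_cast Nat.le_mul_of_pos_left _ (by omega)
          nlinarith)
      · obtain ⟨c, hc1, hc2⟩ := ih (by omega) (by omega)
        rw [List.replicate_succ', List.flatten_append, List.foldl_append, hc1]
        simp only [List.flatten, List.foldl_append, List.append_eq, List.append_nil]
        have hb' : ((p * (2*M+1) : ℕ) : ℝ) * δ + ((2*M+1 : ℕ) : ℝ) * δ ≤ ε := by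
          refine le_trans ?_ hb
          have : ((p+1) * (2*M+1) : ℕ) ≤ (N * (2*M+1) : ℕ) := by
            exact Nat.mul_le_mul_right _ (by omega)
          have h2 : (((p+1) * (2*M+1) : ℕ) : ℝ) ≤ ((N * (2*M+1) : ℕ) : ℝ) := by exact_mod_cast this
          push_cast at h2 ⊢
          nlinarith
        obtain ⟨c', h1, h2⟩ := fold_phase M ε δ hδ hε1 hM _ c (p * (M-1)) hc2
          (by positivity) hb'
        refine ⟨c', ?_, h2⟩
        rw [h1, show ((p * (2*M+1) : ℕ) : ℝ) * δ + ((2 * M + 1 : ℕ) : ℝ) * δ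
            = (((p+1) * (2*M+1) : ℕ) : ℝ) * δ by push_cast; ring,
          show p * (M-1) + (M-1) = (p+1) * (M-1) from (Nat.succ_mul p (M-1)).symm]
  exact key N hN le_rfl

lemma phaseL_length (M : ℕ) (ε δ : ℝ) (hM : 1 ≤ M) : (phaseL M ε δ).length = 3 * M := by
  unfold phaseL
  simp only [List.length_cons, List.length_append, List.length_replicate, List.length_map,
    List.length_range]
  omega

lemma wfInstance_length (N M : ℕ) (ε δ : ℝ) (hM : 1 ≤ M) :
    (wfInstance N M ε δ).length = N * (3 * M) := by
  rw [wfInstance_eq, List.length_flatten, List.map_replicate, phaseL_length M ε δ hM,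
    List.sum_replicate, smul_eq_mul]

lemma getD_flatten_replicate {α : Type*} (d : α) :
    ∀ (n : ℕ) (l : List α) (i : ℕ), i < n * l.length →
    ((List.replicate n l).flatten.getD i d) = l.getD (i % l.length) d := by
  intro n
  induction n with
  | zero => intro l i hi; omega
  | succ n ih =>
    intro l i hi
    rw [List.replicate_succ, List.flatten_cons]
    rcases Nat.lt_or_ge i l.length with h | h
    · rw [List.getD_append _ _ _ _ h, Nat.mod_eq_of_lt h]
    · rw [List.getD_append_right _ _ _ _ h, ih l (i - l.length) (by
        have h2 : (n+1) * l.length = n * l.length + l.length := Nat.succ_mul n l.length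
        omega)]
      congr 1
      conv_rhs => rw [show i = l.length + (i - l.length) by omega]
      rw [Nat.add_mod_left]

lemma phaseL_getD (M : ℕ) (ε δ : ℝ) (hM : 1 ≤ M) (q : ℕ) (hq : q < 3 * M) (d : ℝ × Color3) :
    (phaseL M ε δ).getD q d =
      if q = 0 then (δ, Color3.white)
      else if q < M then (ε, Color3.white)
      else (δ, wcol (q - M)) := by
  unfold phaseL
  rw [List.cons_append]
  rcases q with _ | q
  · simp
  · rw [List.getD_cons_succ]
    rcases Nat.lt_or_ge q (M - 1) with h | h
    · rw [List.getD_append _ _ _ _ (by simpa using h),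
        List.getD_eq_getElem _ _ (by simpa using h), List.getElem_replicate,
        if_neg (by omega), if_pos (by omega)]
    · rw [List.getD_append_right _ _ _ _ (by simp; omega),
        List.length_replicate,
        List.getD_eq_getElem _ _ (by simp; omega)]
      rw [if_neg (by omega), if_neg (by omega)]
      simp only [List.getElem_map, List.getElem_range]
      rw [show q - (M - 1) = q + 1 - M by omega]

lemma item_charac (N M : ℕ) (ε δ : ℝ) (hM : 1 ≤ M) (t : ℕ) (h1 : 1 ≤ t)
    (h2 : t ≤ N * (3 * M)) :
    itemColor (wfInstance N M ε δ) t =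
      (if (t - 1) % (3 * M) < M then Color3.white else wcol ((t - 1) % (3 * M) - M)) ∧
    itemSize (wfInstance N M ε δ) t =
      (if (t - 1) % (3 * M) = 0 then δ else if (t - 1) % (3 * M) < M then ε else δ) := by
  have hlen : (phaseL M ε δ).length = 3 * M := phaseL_length M ε δ hM
  have hq : (t - 1) % (3 * M) < 3 * M := Nat.mod_lt _ (by omega)
  have key : (wfInstance N M ε δ).getD (t - 1) (0, Color3.white) =
      if (t-1) % (3*M) = 0 then (δ, Color3.white)
      else if (t-1) % (3*M) < M then (ε, Color3.white)
      else (δ, wcol ((t-1) % (3*M) - M)) := by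
    have hlt : t - 1 < N * (phaseL M ε δ).length := by rw [hlen]; omega
    rw [wfInstance_eq, getD_flatten_replicate _ N _ (t - 1) hlt, hlen, phaseL_getD M ε δ hM _ hq]
  constructor
  · rw [itemColor, key]
    split_ifs with hA hB hB <;> first | rfl | omega
  · rw [itemSize, key]
    split_ifs <;> rfl

def foptQ (M q : ℕ) : ℕ :=
  if q = 0 then 1 else if q < M then q + 1 else if q < 2 * M - 1 then q - M + 2 else 1

def fopt (M t : ℕ) : ℕ := foptQ M ((t - 1) % (3 * M))

lemma foptQ_A (M : ℕ) : foptQ M 0 = 1 := rfl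

lemma foptQ_B (M q : ℕ) (h1 : 1 ≤ q) (h2 : q < M) : foptQ M q = q + 1 := by
  unfold foptQ; rw [if_neg (by omega), if_pos h2]

lemma foptQ_C (M q : ℕ) (h1 : M ≤ q) (h2 : q < 2 * M - 1) : foptQ M q = q - M + 2 := by
  unfold foptQ; rw [if_neg (by omega), if_neg (by omega), if_pos h2]

lemma foptQ_D (M q : ℕ) (hM : 1 ≤ M) (h : 2 * M - 1 ≤ q) : foptQ M q = 1 := by
  unfold foptQ; rw [if_neg (by omega), if_neg (by omega), if_neg (by omega)]

lemma fopt_mod (M p q : ℕ) (hq : q < 3 * M) : fopt M (3 * M * p + q + 1) = foptQ M q := by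
  unfold fopt
  congr 1
  simp only [Nat.add_sub_cancel]
  rw [Nat.mul_add_mod, Nat.mod_eq_of_lt hq]

lemma block_le {B p q p' q' : ℕ} (hq' : q' < B) (h : B * p + q < B * p' + q') : p ≤ p' := by
  by_contra h'
  push_neg at h'
  have h2 : B * (p' + 1) ≤ B * p := Nat.mul_le_mul_left B h'
  rw [Nat.mul_add, Nat.mul_one] at h2
  omega

lemma decomp (N M : ℕ) (ε δ : ℝ) (hM : 1 ≤ M) (t : ℕ) (h1 : 1 ≤ t) (h2 : t ≤ N * (3 * M)) :
    ∃ p q, q < 3 * M ∧ t = 3 * M * p + q + 1 ∧ fopt M t = foptQ M q ∧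
      itemColor (wfInstance N M ε δ) t =
        (if q < M then Color3.white else wcol (q - M)) := by
  refine ⟨(t - 1) / (3 * M), (t - 1) % (3 * M), Nat.mod_lt _ (by omega), ?_, rfl,
    (item_charac N M ε δ hM t h1 h2).1⟩
  have := Nat.div_add_mod (t - 1) (3 * M)
  omega

lemma fopt_valid_colors (N M : ℕ) (ε δ : ℝ) (hM : 2 ≤ M) :
    ∀ i j, 1 ≤ i → i < j → j ≤ (wfInstance N M ε δ).length → fopt M i = fopt M j →
    (∀ l, i < l → l < j → fopt M l ≠ fopt M i) →
    itemColor (wfInstance N M ε δ) i ≠ itemColor (wfInstance N M ε δ) j := by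
  intro i j hi hij hj hf hl heq
  have hM1 : 1 ≤ M := by omega
  rw [wfInstance_length N M ε δ hM1] at hj
  obtain ⟨pi, qi, hqiM, hiq, hfi, hci⟩ := decomp N M ε δ hM1 i hi (by omega)
  obtain ⟨pj, qj, hqjM, hjq, hfj, hcj⟩ := decomp N M ε δ hM1 j (by omega) hj
  rw [hfi, hfj] at hf
  rw [hci, hcj] at heq
  -- basic block facts
  have hple : pi ≤ pj := block_le (p := pi) (q := qi) hqjM (by omega)
  have hXY : pi < pj → 3 * M * pi + 3 * M ≤ 3 * M * pj := by
    intro h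
    have h2 : 3 * M * (pi + 1) ≤ 3 * M * pj := Nat.mul_le_mul_left _ (by omega)
    rw [Nat.mul_add, Nat.mul_one] at h2
    exact h2
  have hpij_of_eq : qi = qj → pi < pj := by
    intro h
    rcases Nat.lt_or_eq_of_le hple with h' | h'
    · exact h'
    · exfalso; rw [h'] at hiq; omega
  rcases (show qi = 0 ∨ (1 ≤ qi ∧ qi < M) ∨ (M ≤ qi ∧ qi < 2 * M - 1) ∨ (2 * M - 1 ≤ qi)
      by omega) with hA | ⟨hB1, hB2⟩ | ⟨hC1, hC2⟩ | hD <;>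
    rcases (show qj = 0 ∨ (1 ≤ qj ∧ qj < M) ∨ (M ≤ qj ∧ qj < 2 * M - 1) ∨ (2 * M - 1 ≤ qj)
      by omega) with hA' | ⟨hB1', hB2'⟩ | ⟨hC1', hC2'⟩ | hD'
  -- AA
  · have hpij := hpij_of_eq (by omega)
    have hY := hXY hpij
    exact hl (3 * M * pi + (2 * M - 1) + 1) (by omega) (by omega)
      (by rw [fopt_mod M pi (2*M-1) (by omega), foptQ_D M _ hM1 (by omega), hfi, hA, foptQ_A])
  -- AB
  · rw [hA, foptQ_A, foptQ_B M qj hB1' hB2'] at hf; omega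
  -- AC
  · rw [hA, foptQ_A, foptQ_C M qj hC1' hC2'] at hf; omega
  -- AD
  · rw [if_pos (by omega), if_neg (by omega)] at heq
    exact wcol_ne_white _ heq.symm
  -- BA
  · rw [hA', foptQ_A, foptQ_B M qi hB1 hB2] at hf; omega
  -- BB
  · rw [foptQ_B M qi hB1 hB2, foptQ_B M qj hB1' hB2'] at hf
    have hqq : qi = qj := by omega
    have hpij := hpij_of_eq hqq
    have hY := hXY hpij
    exact hl (3 * M * pi + (M + qi - 1) + 1) (by omega) (by omega)
      (by rw [fopt_mod M pi (M + qi - 1) (by omega), foptQ_C M _ (by omega) (by omega), hfi,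
        foptQ_B M qi hB1 hB2]; try omega)
  -- BC
  · rw [if_pos (by omega), if_neg (by omega)] at heq
    exact wcol_ne_white _ heq.symm
  -- BD
  · rw [foptQ_B M qi hB1 hB2, foptQ_D M qj hM1 hD'] at hf; omega
  -- CA
  · rw [hA', foptQ_A, foptQ_C M qi hC1 hC2] at hf; omega
  -- CB
  · rw [if_neg (by omega), if_pos (by omega)] at heq
    exact wcol_ne_white _ heq
  -- CC
  · rw [foptQ_C M qi hC1 hC2, foptQ_C M qj hC1' hC2'] at hf
    have hqq : qi = qj := by omega
    have hpij := hpij_of_eq hqq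
    have hY := hXY hpij
    exact hl (3 * M * pj + (qi - M + 1) + 1) (by omega) (by omega)
      (by rw [fopt_mod M pj (qi - M + 1) (by omega), foptQ_B M _ (by omega) (by omega), hfi,
        foptQ_C M qi hC1 hC2]; try omega)
  -- CD
  · rw [foptQ_C M qi hC1 hC2, foptQ_D M qj hM1 hD'] at hf; omega
  -- DA
  · rw [if_neg (by omega), if_pos (by omega)] at heq
    exact wcol_ne_white _ heq
  -- DB
  · rw [if_neg (by omega), if_pos (by omega)] at heq
    exact wcol_ne_white _ heq
  -- DC
  · rw [foptQ_D M qi hM1 hD, foptQ_C M qj hC1' hC2'] at hf; omega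
  -- DD
  · rw [if_neg (by omega), if_neg (by omega)] at heq
    have hpar := (wcol_eq_iff _ _).mp heq
    rcases Nat.lt_or_eq_of_le hple with hpij | hpe
    · have hY := hXY hpij
      exact hl (3 * M * pj + 0 + 1) (by omega) (by omega)
        (by rw [fopt_mod M pj 0 (by omega), foptQ_A, hfi, foptQ_D M qi hM1 hD])
    · rw [hpe] at hiq
      have hqq : qi + 2 ≤ qj := by omega
      exact hl (3 * M * pj + (qi + 1) + 1) (by omega) (by omega)
        (by rw [fopt_mod M pj (qi + 1) (by omega), foptQ_D M _ hM1 (by omega), hfi,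
          foptQ_D M qi hM1 hD])

lemma sum_filter_le (σ : List (ℝ × Color3)) (f : ℕ → ℕ) (b : ℕ) (e : ℝ)
    (hsz : ∀ t ∈ Finset.Icc 1 σ.length, 0 ≤ itemSize σ t ∧ itemSize σ t ≤ e)
    (htot : (σ.length : ℝ) * e ≤ 1) :
    (∑ t ∈ (Finset.Icc 1 σ.length).filter fun t => f t = b, itemSize σ t) ≤ 1 := by
  calc (∑ t ∈ (Finset.Icc 1 σ.length).filter fun t => f t = b, itemSize σ t)
      ≤ ∑ t ∈ Finset.Icc 1 σ.length, itemSize σ t :=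
        Finset.sum_le_sum_of_subset_of_nonneg (Finset.filter_subset _ _)
          (fun t ht _ => (hsz t ht).1)
    _ ≤ (Finset.Icc 1 σ.length).card • e :=
        Finset.sum_le_card_nsmul _ _ _ (fun t ht => (hsz t ht).2)
    _ = (σ.length : ℝ) * e := by rw [Nat.card_Icc, nsmul_eq_mul]; norm_num
    _ ≤ 1 := htot

lemma size_bounds (N M : ℕ) (ε δ : ℝ) (hM : 1 ≤ M) (hδ : 0 ≤ δ) (hδε : δ ≤ ε) :
    ∀ t ∈ Finset.Icc 1 (wfInstance N M ε δ).length,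
      0 ≤ itemSize (wfInstance N M ε δ) t ∧ itemSize (wfInstance N M ε δ) t ≤ ε := by
  intro t ht
  rw [Finset.mem_Icc, wfInstance_length N M ε δ hM] at ht
  rw [(item_charac N M ε δ hM t ht.1 ht.2).2]
  split_ifs <;> constructor <;> linarith

lemma foptQ_bounds (M q : ℕ) (hM : 1 ≤ M) (hq : q < 3 * M) :
    1 ≤ foptQ M q ∧ foptQ M q ≤ M := by
  unfold foptQ; split_ifs <;> omega

lemma OPT_mem (N M : ℕ) (ε δ : ℝ) (hM : 2 ≤ M) (hδ : 0 ≤ δ) (hδε : δ ≤ ε)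
    (htot : ((N * (3 * M) : ℕ) : ℝ) * ε ≤ 1) :
    ∃ f : ℕ → ℕ, (∀ t, 1 ≤ t → t ≤ (wfInstance N M ε δ).length → 1 ≤ f t ∧ f t ≤ M) ∧
      ValidAssign (wfInstance N M ε δ) f := by
  have hM1 : 1 ≤ M := by omega
  refine ⟨fopt M, ?_, ?_, fopt_valid_colors N M ε δ hM⟩
  · intro t _ _
    exact foptQ_bounds M _ hM1 (Nat.mod_lt _ (by omega))
  · intro b
    refine sum_filter_le _ _ _ ε (size_bounds N M ε δ hM1 hδ hδε) ?_
    rw [wfInstance_length N M ε δ hM1]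
    exact htot

lemma OPT_lower (N M : ℕ) (ε δ : ℝ) (hM : 1 ≤ M) (hN : 1 ≤ N) (L : ℕ)
    (f : ℕ → ℕ)
    (hrange : ∀ t, 1 ≤ t → t ≤ (wfInstance N M ε δ).length → 1 ≤ f t ∧ f t ≤ L)
    (hva : ValidAssign (wfInstance N M ε δ) f) : M ≤ L := by
  obtain ⟨hsum, hcol⟩ := hva
  have hlen : (wfInstance N M ε δ).length = N * (3 * M) := wfInstance_length N M ε δ hM
  have hMlen : M ≤ N * (3 * M) := by
    calc M ≤ 3 * M := by omega
    _ ≤ N * (3 * M) := Nat.le_mul_of_pos_left _ (by omega)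
  have hwhite : ∀ t, 1 ≤ t → t ≤ M → itemColor (wfInstance N M ε δ) t = Color3.white := by
    intro t h1 h2
    rw [(item_charac N M ε δ hM t h1 (by omega)).1, if_pos]
    have : (t - 1) % (3 * M) = t - 1 := Nat.mod_eq_of_lt (by omega)
    omega
  have key : ∀ a b, 1 ≤ a → a < b → b ≤ M → f a = f b → False := by
    intro a b h1 hab h2 hfe
    have hTne : ((Finset.Ico a b).filter (fun l => f l = f b)).Nonempty :=
      ⟨a, by rw [Finset.mem_filter, Finset.mem_Ico]; exact ⟨⟨le_refl a, hab⟩, hfe⟩⟩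
    set i := ((Finset.Ico a b).filter (fun l => f l = f b)).max' hTne with hidef
    have hiT : i ∈ (Finset.Ico a b).filter (fun l => f l = f b) := Finset.max'_mem _ hTne
    rw [Finset.mem_filter, Finset.mem_Ico] at hiT
    have hmax : ∀ l, i < l → l < b → f l ≠ f i := by
      intro l hl1 hl2 hfl
      have hlT : l ∈ (Finset.Ico a b).filter (fun l => f l = f b) := by
        rw [Finset.mem_filter, Finset.mem_Ico]
        exact ⟨⟨by omega, hl2⟩, by rw [hfl, hiT.2]⟩
      have := Finset.le_max' _ l hlT
      omega
    have hne := hcol i b (by omega) (by omega) (by omega) hiT.2 hmax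
    exact hne (by rw [hwhite i (by omega) (by omega), hwhite b (by omega) h2])
  have hinj : Set.InjOn f (Finset.Icc 1 M : Finset ℕ) := by
    intro a ha b hb hab
    simp only [Finset.coe_Icc, Set.mem_Icc] at ha hb
    by_contra hne
    rcases Nat.lt_or_ge a b with h | h
    · exact key a b ha.1 h hb.2 hab
    · exact key b a hb.1 (by omega) ha.2 hab.symm
  have hmaps : ∀ a ∈ Finset.Icc 1 M, f a ∈ Finset.Icc 1 L := by
    intro a ha
    rw [Finset.mem_Icc] at ha ⊢
    exact hrange a ha.1 (by omega)
  have := Finset.card_le_card_of_injOn f hmaps hinj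
  simpa using this

lemma OPT_eq (N M : ℕ) (ε δ : ℝ) (hM : 2 ≤ M) (hδ : 0 ≤ δ) (hδε : δ ≤ ε)
    (hN : 1 ≤ N) (htot : ((N * (3 * M) : ℕ) : ℝ) * ε ≤ 1) :
    OPTlist (wfInstance N M ε δ) = M := by
  have hmem : M ∈ {L | ∃ f : ℕ → ℕ,
      (∀ t, 1 ≤ t → t ≤ (wfInstance N M ε δ).length → 1 ≤ f t ∧ f t ≤ L) ∧
      ValidAssign (wfInstance N M ε δ) f} := OPT_mem N M ε δ hM hδ hδε htot
  refine le_antisymm (Nat.sInf_le hmem) (le_csInf ⟨M, hmem⟩ ?_)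
  rintro L ⟨f, hrange, hva⟩
  exact OPT_lower N M ε δ (by omega) hN L f hrange hva

lemma main_part (N M : ℕ) (hN : 2 ≤ N) (hM : 4 ≤ M) :
    OPTlist (wfInstance N M (1 / ((N : ℝ) ^ 2 * (M : ℝ) ^ 2))
      ((1 / ((N : ℝ) ^ 2 * (M : ℝ) ^ 2)) ^ 2)) = M ∧
    (wfRun (wfInstance N M (1 / ((N : ℝ) ^ 2 * (M : ℝ) ^ 2))
      ((1 / ((N : ℝ) ^ 2 * (M : ℝ) ^ 2)) ^ 2))).length = N * M - N + 1 := by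
  have hNR : (2 : ℝ) ≤ (N : ℝ) := by exact_mod_cast hN
  have hMR : (4 : ℝ) ≤ (M : ℝ) := by exact_mod_cast hM
  have hA : (0 : ℝ) < (N : ℝ) ^ 2 * (M : ℝ) ^ 2 := by positivity
  set ε := 1 / ((N : ℝ) ^ 2 * (M : ℝ) ^ 2) with hεdef
  have hε0 : 0 < ε := by positivity
  have hε1 : ε ≤ 1 := by
    rw [hεdef, div_le_one hA]
    nlinarith [mul_le_mul (show (4:ℝ) ≤ (N:ℝ)^2 by nlinarith)
      (show (16:ℝ) ≤ (M:ℝ)^2 by nlinarith) (by norm_num) (by positivity : (0:ℝ) ≤ (N:ℝ)^2)]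
  have hδ0 : 0 < ε ^ 2 := by positivity
  have hδε : ε ^ 2 ≤ ε := by nlinarith
  have hc1 : ((N * (2 * M + 1) : ℕ) : ℝ) ≤ (N : ℝ) ^ 2 * (M : ℝ) ^ 2 := by
    push_cast
    exact mul_le_mul (show (N:ℝ) ≤ (N:ℝ)^2 by nlinarith)
      (show 2*(M:ℝ)+1 ≤ (M:ℝ)^2 by nlinarith) (by nlinarith) (by positivity)
  have hc2 : ((N * (3 * M) : ℕ) : ℝ) ≤ (N : ℝ) ^ 2 * (M : ℝ) ^ 2 := by
    push_cast
    exact mul_le_mul (show (N:ℝ) ≤ (N:ℝ)^2 by nlinarith)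
      (show 3*(M:ℝ) ≤ (M:ℝ)^2 by nlinarith) (by nlinarith) (by positivity)
  have hkey1 : ((N * (2 * M + 1) : ℕ) : ℝ) * ε ^ 2 ≤ ε := by
    have h1 : ((N * (2 * M + 1) : ℕ) : ℝ) * ε ≤ 1 := by
      rw [hεdef, mul_one_div, div_le_one hA]; exact hc1
    calc ((N * (2 * M + 1) : ℕ) : ℝ) * ε ^ 2 = (((N * (2 * M + 1) : ℕ) : ℝ) * ε) * ε := by ring
      _ ≤ 1 * ε := mul_le_mul_of_nonneg_right h1 hε0.le
      _ = ε := one_mul ε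
  have hkey2 : ((N * (3 * M) : ℕ) : ℝ) * ε ≤ 1 := by
    rw [hεdef, mul_one_div, div_le_one hA]; exact hc2
  constructor
  · exact OPT_eq N M ε (ε ^ 2) (by omega) hδ0.le hδε (by omega) hkey2
  · obtain ⟨c', h1, _⟩ := fold_run N M ε (ε ^ 2) hδ0 hε1 (by omega) (by omega) hkey1
    rw [wfRun] at h1
    rw [wfRun, h1]
    simp only [List.length_cons, List.length_replicate]
    have hM' : N * M = N * (M - 1) + N := by
      conv_lhs => rw [show M = (M - 1) + 1 by omega]
      rw [Nat.mul_add, Nat.mul_one]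
    omega

lemma mem_sizes (N M : ℕ) (ε δ : ℝ) (p : ℝ × Color3) (hp : p ∈ wfInstance N M ε δ) :
    p.1 = δ ∨ p.1 = ε := by
  rw [wfInstance_eq, List.mem_flatten] at hp
  obtain ⟨l, hl, hpl⟩ := hp
  rw [List.eq_of_mem_replicate hl] at hpl
  unfold phaseL at hpl
  rw [List.cons_append, List.mem_cons, List.mem_append] at hpl
  rcases hpl with h | h | h
  · left; rw [h]
  · right; rw [(List.eq_of_mem_replicate h)]
  · left
    rw [List.mem_map] at h
    obtain ⟨j, _, hj⟩ := h
    rw [← hj]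

/-- for `M ≥ 4`, `N ≥ 2`, `ε = 1/(N²M²)` and `δ = ε²`, the above instance has
`OPT = M`, while Worst Fit uses `NM − N + 1` bins.  Consequently Worst Fit has an unbounded
asymptotic competitive ratio: for every `r` and `K` there is an instance with `OPT ≥ K` on
which Worst Fit uses at least `r·OPT` bins. -/
theorem worstFit_unbounded :
    (∀ N M : ℕ, 2 ≤ N → 4 ≤ M →
      OPTlist (wfInstance N M (1 / ((N : ℝ) ^ 2 * (M : ℝ) ^ 2))
        ((1 / ((N : ℝ) ^ 2 * (M : ℝ) ^ 2)) ^ 2)) = M ∧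
      (wfRun (wfInstance N M (1 / ((N : ℝ) ^ 2 * (M : ℝ) ^ 2))
        ((1 / ((N : ℝ) ^ 2 * (M : ℝ) ^ 2)) ^ 2))).length = N * M - N + 1) ∧
    (∀ r : ℝ, ∀ K : ℕ, ∃ σ : List (ℝ × Color3),
      (∀ p ∈ σ, p.1 ∈ Set.Icc (0 : ℝ) 1) ∧
      K ≤ OPTlist σ ∧
      r * (OPTlist σ : ℝ) ≤ ((wfRun σ).length : ℝ)) := by
  constructor
  · exact fun N M hN hM => main_part N M hN hM
  · intro r K
    obtain ⟨M, hMK, hM⟩ : ∃ M, K ≤ M ∧ 4 ≤ M := ⟨max K 4, le_max_left _ _, le_max_right _ _⟩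
    obtain ⟨N, hNceil, hN⟩ : ∃ N : ℕ, (N : ℝ) = (⌈2 * r⌉₊ : ℝ) + 2 ∧ 2 ≤ N :=
      ⟨⌈2 * r⌉₊ + 2, by push_cast; ring, by omega⟩
    obtain ⟨hopt, hlen⟩ := main_part N M hN hM
    set ε := 1 / ((N : ℝ) ^ 2 * (M : ℝ) ^ 2) with hεdef
    have hNR : (2 : ℝ) ≤ (N : ℝ) := by exact_mod_cast hN
    have hMR : (4 : ℝ) ≤ (M : ℝ) := by exact_mod_cast hM
    have hA : (0 : ℝ) < (N : ℝ) ^ 2 * (M : ℝ) ^ 2 := by positivity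
    have hε0 : 0 < ε := by positivity
    have hε1 : ε ≤ 1 := by
      rw [hεdef, div_le_one hA]
      nlinarith [mul_le_mul (show (4:ℝ) ≤ (N:ℝ)^2 by nlinarith)
        (show (16:ℝ) ≤ (M:ℝ)^2 by nlinarith) (by norm_num) (by positivity : (0:ℝ) ≤ (N:ℝ)^2)]
    refine ⟨wfInstance N M ε (ε ^ 2), ?_, ?_, ?_⟩
    · intro p hp
      rcases mem_sizes N M ε (ε ^ 2) p hp with h | h <;> rw [h] <;>
        constructor <;> nlinarith
    · rw [hopt]; exact hMK
    · rw [hopt, hlen]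
      have hNM : N ≤ N * M := Nat.le_mul_of_pos_right _ (by omega)
      have hcast : ((N * M - N + 1 : ℕ) : ℝ) = (N : ℝ) * M - N + 1 := by
        rw [Nat.cast_add, Nat.cast_sub hNM, Nat.cast_mul, Nat.cast_one]
      rw [hcast]
      rcases le_or_gt r 0 with hr | hr
      · have h1 : r * M ≤ 0 := mul_nonpos_of_nonpos_of_nonneg hr (by linarith)
        nlinarith
      · have h2r : 2 * r ≤ (⌈2 * r⌉₊ : ℝ) := Nat.le_ceil _
        have h2r' : (⌈2 * r⌉₊ : ℝ) < 2 * r + 1 := Nat.ceil_lt_add_one (by linarith)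
        have hN2r : 2 * r + 2 ≤ (N : ℝ) := by rw [hNceil]; linarith
        have hN2r' : (N : ℝ) ≤ 2 * r + 3 := by rw [hNceil]; linarith
        have h1 : (2 * r + 2) * M ≤ (N : ℝ) * M := by
          exact mul_le_mul_of_nonneg_right hN2r (by linarith)
        have h2 : 4 * r ≤ r * M := by nlinarith
        linarith
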